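/- Let n ≥ 2 be an integer and j a real number such that 2j is a nonnegative integer with n − 2j a positive even integer, and set k = n/2 − j. Let X_1, …, X_k be independent geometric random variables where X_r has success parameter e_{j'_r}(j) with j'_r = n/2 − r + 1. Then for every ε ∈ (0,1) and every real T ≥ 2n·ln(n/ε) − 1, the probability P(X_1 + ⋯ + X_k > T) ≤ ε. -/

import Mathlib

open MeasureTheory ProbabilityTheory

/-- The probability `e_{j'}(j)` that a random SWAP test on `2j'` qubits in the
angular-momentum-`j` sector detects a singlet. -/
noncomputable def eprob (j' j : ℝ) : ℝ :=
  (j' * (j' + 1) - j * (j + 1)) / (2 * j' * (2 * j' - 1))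

set_option maxHeartbeats 1000000 in
lemma geom_mass_aux {Ω : Type*} [MeasurableSpace Ω] (P : Measure Ω) [IsProbabilityMeasure P]
    (Y : Ω → ℕ) (hY : Measurable Y) (p : ℝ) (hp0 : 0 < p) (hp1 : p ≤ 1)
    (hpmf : ∀ s : ℕ, 1 ≤ s → P {ω | Y ω = s} = ENNReal.ofReal (p * (1 - p) ^ (s - 1))) :
    P {ω | Y ω = 0} = 0 := by
  have key : ∀ s : ℕ, P {ω | Y ω = s + 1} = ENNReal.ofReal (p * (1 - p) ^ s) := by
    intro s
    simpa using hpmf (s + 1) (by omega)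
  have hgeo : (∑' s : ℕ, P {ω | Y ω = s + 1}) = 1 := by
    have h1p : (0:ℝ) ≤ 1 - p := by linarith
    calc (∑' s : ℕ, P {ω | Y ω = s + 1})
        = ∑' s : ℕ, ENNReal.ofReal p * (ENNReal.ofReal (1 - p)) ^ s := by
          refine tsum_congr fun s => ?_
          rw [key s, ENNReal.ofReal_mul hp0.le, ENNReal.ofReal_pow h1p]
      _ = ENNReal.ofReal p * (1 - ENNReal.ofReal (1 - p))⁻¹ := by
          rw [ENNReal.tsum_mul_left, ENNReal.tsum_geometric]
      _ = ENNReal.ofReal p * (ENNReal.ofReal p)⁻¹ := by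
          congr 1
          rw [← ENNReal.ofReal_one, ← ENNReal.ofReal_sub _ h1p]
          norm_num
      _ = 1 := ENNReal.mul_inv_cancel (ENNReal.ofReal_pos.mpr hp0).ne' ENNReal.ofReal_ne_top
  have hU : P (⋃ s : ℕ, {ω | Y ω = s + 1}) = 1 := by
    rw [measure_iUnion]
    · exact hgeo
    · intro s s' hss'
      apply Set.disjoint_left.2
      intro ω h1 h2
      exact hss' (by simp only [Set.mem_setOf_eq] at h1 h2; omega)
    · intro s
      exact hY (measurableSet_singleton (s + 1))
  have hms : MeasurableSet (⋃ s : ℕ, {ω | Y ω = s + 1}) :=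
    MeasurableSet.iUnion fun s => hY (measurableSet_singleton (s + 1))
  have hcompl : {ω | Y ω = 0} = (⋃ s : ℕ, {ω | Y ω = s + 1})ᶜ := by
    ext ω
    constructor
    · intro h hmem
      rw [Set.mem_iUnion] at hmem
      obtain ⟨s, hs⟩ := hmem
      rw [Set.mem_setOf_eq] at hs h
      omega
    · intro h
      rw [Set.mem_compl_iff, Set.mem_iUnion] at h
      rw [Set.mem_setOf_eq]
      by_contra hne
      exact h ⟨Y ω - 1, by rw [Set.mem_setOf_eq]; omega⟩
  rw [hcompl, measure_compl hms (measure_ne_top P _), hU, measure_univ, tsub_self]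

set_option maxHeartbeats 1000000 in
lemma geom_mgf_aux {Ω : Type*} [MeasurableSpace Ω] (P : Measure Ω) [IsProbabilityMeasure P]
    (Y : Ω → ℕ) (hY : Measurable Y) (p : ℝ) (hp0 : 0 < p) (hp1 : p ≤ 1)
    (hpmf : ∀ s : ℕ, 1 ≤ s → P {ω | Y ω = s} = ENNReal.ofReal (p * (1 - p) ^ (s - 1)))
    (t : ℝ) (ht0 : 0 ≤ t) (htp : Real.exp t * (1 - p) < 1) :
    Integrable (fun ω => Real.exp (t * (Y ω : ℝ))) P ∧
      mgf (fun ω => (Y ω : ℝ)) P t = p * Real.exp t / (1 - Real.exp t * (1 - p)) := by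
  have hzero := geom_mass_aux P Y hY p hp0 hp1 hpmf
  have key : ∀ s : ℕ, P {ω | Y ω = s + 1} = ENNReal.ofReal (p * (1 - p) ^ s) := by
    intro s; simpa using hpmf (s + 1) (by omega)
  set r : ℝ := Real.exp t * (1 - p) with hr
  have h1p : (0:ℝ) ≤ 1 - p := by linarith
  have hr0 : 0 ≤ r := mul_nonneg (Real.exp_pos t).le h1p
  have hr1 : 0 < 1 - r := by linarith
  have hVnn : 0 ≤ p * Real.exp t / (1 - r) :=
    div_nonneg (mul_nonneg hp0.le (Real.exp_pos t).le) hr1.le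
  have hcast : Measurable (fun ω => (Y ω : ℝ)) :=
    (measurable_from_nat (f := (Nat.cast : ℕ → ℝ))).comp hY
  have hmeasf : Measurable (fun ω => Real.exp (t * (Y ω : ℝ))) :=
    Real.measurable_exp.comp (hcast.const_mul t)
  have hmap : ∀ s : ℕ, (P.map Y) {s} = P {ω | Y ω = s} := by
    intro s
    rw [Measure.map_apply hY (measurableSet_singleton s)]
    rfl
  have hterm : ∀ s : ℕ,
      ENNReal.ofReal (Real.exp (t * ((s:ℝ) + 1))) * ENNReal.ofReal (p * (1 - p) ^ s)
        = ENNReal.ofReal (p * Real.exp t) * (ENNReal.ofReal r) ^ s := by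
    intro s
    rw [← ENNReal.ofReal_mul (Real.exp_pos _).le, ← ENNReal.ofReal_pow hr0,
      ← ENNReal.ofReal_mul (mul_nonneg hp0.le (Real.exp_pos t).le)]
    congr 1
    rw [show t * ((s:ℝ) + 1) = (s:ℝ) * t + t by ring, Real.exp_add, Real.exp_nat_mul, hr,
      mul_pow]
    ring
  have hlint : ∫⁻ ω, ENNReal.ofReal (Real.exp (t * (Y ω : ℝ))) ∂P
      = ENNReal.ofReal (p * Real.exp t / (1 - r)) := by
    have h1 : ∫⁻ ω, ENNReal.ofReal (Real.exp (t * (Y ω : ℝ))) ∂P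
        = ∫⁻ s, (fun s : ℕ => ENNReal.ofReal (Real.exp (t * (s : ℝ)))) s ∂(P.map Y) :=
      (lintegral_map (f := fun s : ℕ => ENNReal.ofReal (Real.exp (t * (s : ℝ)))) measurable_from_nat hY).symm
    rw [h1, lintegral_countable']
    have h2 : ∀ s : ℕ,
        ENNReal.ofReal (Real.exp (t * (s : ℝ))) * (P.map Y) {s}
          = (fun s : ℕ => if s = 0 then 0 else
              ENNReal.ofReal (p * Real.exp t) * (ENNReal.ofReal r) ^ (s - 1)) s := by
      intro s
      cases s with
      | zero => simp [hmap 0, hzero]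
      | succ m =>
        simp only [Nat.succ_ne_zero, if_false, Nat.add_sub_cancel]
        rw [hmap (m + 1), key m, Nat.cast_add, Nat.cast_one, hterm m]
    rw [tsum_congr h2, tsum_eq_zero_add' ENNReal.summable]
    simp only [reduceIte, Nat.add_sub_cancel, Nat.succ_ne_zero, if_false, zero_add]
    rw [ENNReal.tsum_mul_left, ENNReal.tsum_geometric]
    have h3 : (1 : ENNReal) - ENNReal.ofReal r = ENNReal.ofReal (1 - r) := by
      rw [← ENNReal.ofReal_one, ← ENNReal.ofReal_sub _ hr0]
    rw [h3, ENNReal.ofReal_div_of_pos hr1, div_eq_mul_inv]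
  constructor
  · refine ⟨hmeasf.aestronglyMeasurable, ?_⟩
    rw [hasFiniteIntegral_iff_ofReal (ae_of_all _ fun ω => (Real.exp_pos _).le), hlint]
    exact ENNReal.ofReal_lt_top
  · rw [mgf, integral_eq_lintegral_of_nonneg_ae (ae_of_all _ fun ω => (Real.exp_pos _).le)
      hmeasf.aestronglyMeasurable, hlint, ENNReal.toReal_ofReal hVnn]

lemma eprob_bounds (D M NN : ℝ) (hD : 0 ≤ D) (hM : 1 ≤ M) (hMN : D + 2*M ≤ NN) :
    0 < eprob ((D + 2*M)/2) (D/2) ∧ eprob ((D + 2*M)/2) (D/2) ≤ 1 ∧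
      (M + 1) / (2 * NN) ≤ eprob ((D + 2*M)/2) (D/2) := by
  have h1 : (0:ℝ) < D + 2*M := by linarith
  have h2 : (0:ℝ) < D + 2*M - 1 := by linarith
  have hNN0 : (0:ℝ) < NN := by linarith
  have hBpos : (0:ℝ) < (D + 2*M) * (D + 2*M - 1) := mul_pos h1 h2
  have hval : eprob ((D + 2*M)/2) (D/2)
      = M * (D + M + 1) / ((D + 2*M) * (D + 2*M - 1)) := by
    unfold eprob
    rw [show (2:ℝ) * ((D + 2*M)/2) * (2 * ((D + 2*M)/2) - 1)
        = (D + 2*M) * (D + 2*M - 1) by ring]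
    congr 1
    ring
  rw [hval]
  refine ⟨div_pos (by nlinarith) hBpos, ?_, ?_⟩
  · rw [div_le_one hBpos]
    nlinarith [mul_nonneg hD hD, mul_nonneg hD (sub_nonneg.2 hM)]
  · rw [div_le_div_iff₀ (by linarith) hBpos]
    have key2 : (M+1) * (D + 2*M - 1) ≤ 2*M*(D + M + 1) := by
      nlinarith [mul_nonneg hD (sub_nonneg.2 hM)]
    calc (M + 1) * ((D + 2*M) * (D + 2*M - 1))
        = (D + 2*M) * ((M+1) * (D + 2*M - 1)) := by ring
      _ ≤ (D + 2*M) * (2*M*(D + M + 1)) := by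
          exact mul_le_mul_of_nonneg_left key2 h1.le
      _ ≤ NN * (2*M*(D + M + 1)) := by
          have : (0:ℝ) ≤ 2*M*(D + M + 1) := by nlinarith
          exact mul_le_mul_of_nonneg_right hMN this
      _ = M * (D + M + 1) * (2 * NN) := by ring

lemma prod_telescope_aux (K : ℕ) :
    ∏ a ∈ Finset.range K, (((a:ℝ) + 2) / ((a:ℝ) + 1)) = K + 1 := by
  induction K with
  | zero => simp
  | succ m ih =>
    rw [Finset.prod_range_succ, ih]
    have hne : ((m:ℝ) + 1) ≠ 0 := by positivity
    push_cast
    field_simp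
    ring


set_option maxHeartbeats 1600000 in
/-- If `n ≥ 2`, `2j` is a nonnegative integer, `n - 2j = 2k` is a positive even integer,
and `X 1, …, X k` are independent geometric random variables where `X r` has success
parameter `e_{j'_r}(j)` with `j'_r = n/2 - r + 1`, then for every `ε ∈ (0,1)` and every
real `T ≥ 2n·ln(n/ε) - 1`, the probability `P(X 1 + ⋯ + X k > T) ≤ ε`. -/
theorem swap_test_error_probability
    {Ω : Type*} [MeasurableSpace Ω] (P : Measure Ω) [IsProbabilityMeasure P]
    (n : ℕ) (hn : 2 ≤ n) (j : ℝ) (h2j : ∃ m : ℕ, (m : ℝ) = 2 * j)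
    (k : ℕ) (hk : 0 < k) (hkj : (n : ℝ) - 2 * j = 2 * k)
    (X : Fin k → Ω → ℕ) (hXmeas : ∀ i, Measurable (X i))
    (hindep : iIndepFun X P)
    (hgeom : ∀ i : Fin k, ∀ t : ℕ, 1 ≤ t →
      P {ω | X i ω = t} = ENNReal.ofReal
        (eprob ((n : ℝ) / 2 - i) j * (1 - eprob ((n : ℝ) / 2 - i) j) ^ (t - 1)))
    (ε : ℝ) (hε : ε ∈ Set.Ioo (0 : ℝ) 1)
    (T : ℝ) (hT : 2 * n * Real.log (n / ε) - 1 ≤ T) :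
    (P {ω | T < ∑ i, (X i ω : ℝ)}).toReal ≤ ε := by
  obtain ⟨hε0, hε1⟩ := hε
  obtain ⟨mj, hmj⟩ := h2j
  have hj0 : 0 ≤ j := by
    have h0 : (0:ℝ) ≤ (mj:ℝ) := Nat.cast_nonneg mj
    linarith
  have hN2 : (2:ℝ) ≤ (n:ℝ) := by exact_mod_cast hn
  have hN0 : (0:ℝ) < (n:ℝ) := by linarith
  have hk1 : (1:ℝ) ≤ (k:ℝ) := by exact_mod_cast hk
  have hkN : 2*(k:ℝ) ≤ (n:ℝ) := by linarith
  set q : ℝ := 1/(2*(n:ℝ)) with hqdef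
  have hq0 : 0 < q := by rw [hqdef]; positivity
  have hq4 : q ≤ 1/4 := by
    rw [hqdef, div_le_div_iff₀ (by linarith) (by norm_num)]
    linarith
  have h1q : (0:ℝ) < 1 - q := by linarith
  set t : ℝ := -Real.log (1 - q) with htdef
  have hexp_t : Real.exp t = (1 - q)⁻¹ := by
    rw [htdef, Real.exp_neg, Real.exp_log h1q]
  have htq : q ≤ t := by
    have := Real.log_le_sub_one_of_pos h1q
    rw [htdef]; linarith
  have ht0 : 0 ≤ t := le_trans hq0.le htq
  set Xr : Fin k → Ω → ℝ := fun i ω => (X i ω : ℝ) with hXrdef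
  have hXrmeas : ∀ i, Measurable (Xr i) := fun i =>
    (measurable_from_nat (f := (Nat.cast : ℕ → ℝ))).comp (hXmeas i)
  have hindepR : iIndepFun Xr P :=
    hindep.comp (fun _ s => (s:ℝ)) (fun _ => measurable_from_nat)
  have hNjk : (n:ℝ) = 2*j + 2*(k:ℝ) := by linarith
  -- per-variable facts
  have hper : ∀ i : Fin k,
      Integrable (fun ω => Real.exp (t * Xr i ω)) P ∧
      mgf (Xr i) P t = eprob ((n:ℝ)/2 - ((i:ℕ):ℝ)) j / (eprob ((n:ℝ)/2 - ((i:ℕ):ℝ)) j - q) ∧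
      (((k:ℝ) - ((i:ℕ):ℝ)) + 1) * q ≤ eprob ((n:ℝ)/2 - ((i:ℕ):ℝ)) j ∧
      q < eprob ((n:ℝ)/2 - ((i:ℕ):ℝ)) j := by
    intro i
    have hiv : ((i:ℕ):ℝ) + 1 ≤ (k:ℝ) := by
      have := i.isLt
      have : ((i:ℕ):ℝ) < (k:ℝ) := by exact_mod_cast this
      have hz : (i:ℕ) + 1 ≤ k := i.isLt
      exact_mod_cast hz
    have hM1 : (1:ℝ) ≤ (k:ℝ) - ((i:ℕ):ℝ) := by linarith
    have hi0 : (0:ℝ) ≤ ((i:ℕ):ℝ) := Nat.cast_nonneg _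
    have harg : (n:ℝ)/2 - ((i:ℕ):ℝ) = (2*j + 2*((k:ℝ) - ((i:ℕ):ℝ)))/2 := by
      rw [hNjk]; ring
    have hj2 : j = (2*j)/2 := by ring
    obtain ⟨hp0, hp1, hplow⟩ := eprob_bounds (2*j) ((k:ℝ) - ((i:ℕ):ℝ)) (n:ℝ)
      (by linarith) hM1 (by linarith)
    rw [← harg, ← hj2] at hp0 hp1 hplow
    set p : ℝ := eprob ((n:ℝ)/2 - ((i:ℕ):ℝ)) j with hpdef
    have hplow' : (((k:ℝ) - ((i:ℕ):ℝ)) + 1) * q ≤ p := by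
      rw [hqdef]
      calc (((k:ℝ) - ((i:ℕ):ℝ)) + 1) * (1/(2*(n:ℝ)))
          = (((k:ℝ) - ((i:ℕ):ℝ)) + 1) / (2*(n:ℝ)) := by ring
        _ ≤ p := hplow
    have hqp : q < p := by nlinarith
    have htp : Real.exp t * (1 - p) < 1 := by
      rw [hexp_t, show (1-q)⁻¹ * (1-p) = (1-p)/(1-q) by ring, div_lt_one h1q]
      linarith
    obtain ⟨hInt, hmgf⟩ := geom_mgf_aux P (X i) (hXmeas i) p hp0 hp1 (hgeom i) t ht0 htp
    refine ⟨hInt, ?_, hplow', hqp⟩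
    rw [show mgf (Xr i) P t = mgf (fun ω => ((X i ω : ℕ):ℝ)) P t from rfl, hmgf,
      div_eq_div_iff (by linarith) (by linarith)]
    rw [hexp_t]
    field_simp
    ring
  -- integrability and mgf of the sum
  have hIntS : Integrable (fun ω => Real.exp (t * (∑ i, Xr i) ω)) P :=
    hindepR.integrable_exp_mul_sum hXrmeas (fun i _ => (hper i).1)
  have hchern := measure_ge_le_exp_mul_mgf (μ := P) (X := ∑ i, Xr i) T ht0 hIntS
  have hmgfS : mgf (∑ i, Xr i) P t = ∏ i, mgf (Xr i) P t :=
    hindepR.mgf_sum hXrmeas Finset.univ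
  -- bound on the product of mgfs
  have hprodbound : (∏ i, mgf (Xr i) P t) ≤ (n:ℝ) - 1/2 := by
    rcases Nat.lt_or_ge k 2 with hk2 | hk2
    · -- k = 1
      have hk1e : k = 1 := by omega
      subst hk1e
      rw [Fin.prod_univ_one]
      obtain ⟨_, hmgf0, hlow0, hqp0⟩ := hper 0
      have hz : (((0 : Fin 1):ℕ):ℝ) = 0 := by norm_num
      have hpval : eprob ((n:ℝ)/2 - (((0 : Fin 1):ℕ):ℝ)) j = 1/((n:ℝ)-1) := by
        rw [hz, sub_zero]
        unfold eprob
        rw [div_eq_div_iff (by nlinarith) (by linarith)]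
        rw [show j = ((n:ℝ)-2)/2 by push_cast at hkj ⊢; linarith]
        ring
      rw [hmgf0, hpval]
      have hq1n : q < 1/((n:ℝ)-1) := by
        rw [hqdef, div_lt_div_iff₀ (by linarith) (by linarith)]
        linarith
      have hden : ((n:ℝ)-1) ≠ 0 := by linarith
      have hden2 : (2*(n:ℝ)) ≠ 0 := by linarith
      have hsub2 : 1/((n:ℝ)-1) - 1/(2*(n:ℝ)) = ((n:ℝ)+1)/(2*(n:ℝ)*((n:ℝ)-1)) := by
        field_simp
        ring
      rw [div_le_iff₀ (sub_pos.2 hq1n), hqdef, hsub2, ← mul_div_assoc,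
        div_le_div_iff₀ (by linarith) (by nlinarith)]
      nlinarith [mul_nonneg (mul_nonneg (by linarith : (0:ℝ) ≤ (n:ℝ)-1)
        (by linarith : (0:ℝ) ≤ (n:ℝ)-2)) (by linarith : (0:ℝ) ≤ (n:ℝ)),
        sq_nonneg ((n:ℝ)-1)]
    · -- k ≥ 2
      have hk2' : (2:ℝ) ≤ (k:ℝ) := by exact_mod_cast hk2
      have hstep : (∏ i, mgf (Xr i) P t)
          ≤ ∏ i : Fin k, (((k:ℝ) - ((i:ℕ):ℝ)) + 1)/((k:ℝ) - ((i:ℕ):ℝ)) := by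
        apply Finset.prod_le_prod (fun i _ => mgf_nonneg) (fun i _ => ?_)
        obtain ⟨_, hmgf_i, hlow, hqp⟩ := hper i
        have hiv : ((i:ℕ):ℝ) + 1 ≤ (k:ℝ) := by
          have hz : (i:ℕ) + 1 ≤ k := i.isLt
          exact_mod_cast hz
        have hM1 : (1:ℝ) ≤ (k:ℝ) - ((i:ℕ):ℝ) := by linarith
        rw [hmgf_i, div_le_div_iff₀ (by linarith) (by linarith)]
        nlinarith
      have htel : (∏ i : Fin k, (((k:ℝ) - ((i:ℕ):ℝ)) + 1)/((k:ℝ) - ((i:ℕ):ℝ)))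
          = (k:ℝ) + 1 := by
        rw [Fin.prod_univ_eq_prod_range (fun a => (((k:ℝ) - (a:ℝ)) + 1)/((k:ℝ) - (a:ℝ))) k]
        rw [← Finset.prod_range_reflect]
        rw [Finset.prod_congr rfl (fun a ha => ?_), prod_telescope_aux k]
        have ha' : a < k := Finset.mem_range.1 ha
        have hsub : k - 1 - a = k - (1 + a) := by omega
        have hcast : ((k - 1 - a : ℕ):ℝ) = (k:ℝ) - 1 - (a:ℝ) := by
          rw [hsub, Nat.cast_sub (by omega)]
          push_cast; ring
        rw [hcast]
        rw [show (k:ℝ) - ((k:ℝ) - 1 - (a:ℝ)) + 1 = (a:ℝ) + 2 by ring,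
          show (k:ℝ) - ((k:ℝ) - 1 - (a:ℝ)) = (a:ℝ) + 1 by ring]
      rw [htel] at hstep
      have : (k:ℝ) + 1 ≤ (n:ℝ) - 1/2 := by linarith
      linarith
  -- final tail estimate
  have hL : 0 < Real.log ((n:ℝ)/ε) := by
    apply Real.log_pos
    rw [lt_div_iff₀ hε0]
    nlinarith
  have h2nq : 2*(n:ℝ)*q = 1 := by
    rw [hqdef]; field_simp
  have hexpfin : Real.exp (-t*T) * ((n:ℝ) - 1/2) ≤ ε := by
    have h1 : Real.exp (-t*T) ≤ Real.exp (-(t*(2*(n:ℝ)*Real.log ((n:ℝ)/ε) - 1))) := by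
      apply Real.exp_le_exp.2
      have := mul_le_mul_of_nonneg_left hT ht0
      linarith
    have h2 : Real.exp (-(t*(2*(n:ℝ)*Real.log ((n:ℝ)/ε) - 1)))
        = Real.exp t * Real.exp (-(2*(n:ℝ)*t*Real.log ((n:ℝ)/ε))) := by
      rw [← Real.exp_add]; congr 1; ring
    have h3 : Real.exp (-(2*(n:ℝ)*t*Real.log ((n:ℝ)/ε))) ≤ Real.exp (-Real.log ((n:ℝ)/ε)) := by
      apply Real.exp_le_exp.2
      have hge : 1 * Real.log ((n:ℝ)/ε) ≤ (2*(n:ℝ)*t) * Real.log ((n:ℝ)/ε) := by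
        apply mul_le_mul_of_nonneg_right _ hL.le
        nlinarith
      linarith
    have h4 : Real.exp (-Real.log ((n:ℝ)/ε)) = ε/(n:ℝ) := by
      rw [Real.exp_neg, Real.exp_log (by positivity), inv_div]
    have h5 : Real.exp t * (ε/(n:ℝ)) * ((n:ℝ) - 1/2) = ε := by
      rw [hexp_t, hqdef]
      have hden : (2*(n:ℝ) - 1) ≠ 0 := by linarith
      rw [show (1:ℝ) - 1/(2*(n:ℝ)) = (2*(n:ℝ)-1)/(2*(n:ℝ)) by field_simp, inv_div]
      field_simp
    calc Real.exp (-t*T) * ((n:ℝ) - 1/2)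
        ≤ (Real.exp t * Real.exp (-(2*(n:ℝ)*t*Real.log ((n:ℝ)/ε)))) * ((n:ℝ) - 1/2) := by
          apply mul_le_mul_of_nonneg_right _ (by linarith)
          rw [← h2]; exact h1
      _ ≤ (Real.exp t * (ε/(n:ℝ))) * ((n:ℝ) - 1/2) := by
          apply mul_le_mul_of_nonneg_right _ (by linarith)
          apply mul_le_mul_of_nonneg_left _ (Real.exp_pos t).le
          rw [← h4]; exact h3
      _ = ε := h5
  -- combine everything
  have hsub : {ω | T < ∑ i, (X i ω:ℝ)} ⊆ {ω | T ≤ (∑ i, Xr i) ω} := by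
    intro ω hω
    simp only [Set.mem_setOf_eq, Finset.sum_apply] at *
    exact le_of_lt hω
  calc (P {ω | T < ∑ i, (X i ω:ℝ)}).toReal
      ≤ (P {ω | T ≤ (∑ i, Xr i) ω}).toReal :=
        ENNReal.toReal_mono (measure_ne_top _ _) (measure_mono hsub)
    _ ≤ Real.exp (-t*T) * mgf (∑ i, Xr i) P t := hchern
    _ = Real.exp (-t*T) * ∏ i, mgf (Xr i) P t := by rw [hmgfS]
    _ ≤ Real.exp (-t*T) * ((n:ℝ) - 1/2) :=
        mul_le_mul_of_nonneg_left hprodbound (Real.exp_pos _).le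
    _ ≤ ε := hexpfin
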